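/- For every integer n ≥ 0, the sum of the entries of the n-th row of Catalan's triangle equals the (n+1)-st Catalan number: Σ_{k=0}^{n} C_{n,k} = catalan(n+1), where catalan(m) = (1/(m+1)) · binom(2m, m). -/
import Mathlib


/-- Catalan's triangle: `C_{n,k} = ((n-k+1)/(n+1)) * binom(n+k, n)` (the division is exact). -/
def catalanTriangle (n k : ℕ) : ℕ := (n - k + 1) * (n + k).choose n / (n + 1)

lemma catalanTriangle_add (n k : ℕ) (h : k ≤ n) :
    catalanTriangle n k + (n + k).choose (n + 1) = (n + k).choose n := by
  set C := (n + k).choose n with hC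
  set D := (n + k).choose (n + 1) with hD
  have hmul : D * (n + 1) = C * k := by
    simpa [hC, hD] using Nat.choose_succ_right_eq (n + k) n
  have hle : D ≤ C := by
    have : D * (n + 1) ≤ C * (n + 1) := by
      rw [hmul]; exact Nat.mul_le_mul_left _ (by omega)
    exact Nat.le_of_mul_le_mul_right this (by omega)
  have hexact : (n - k + 1) * C = (n + 1) * (C - D) := by
    have h1 : (n - k + 1) * C = (n + 1) * C - k * C := by
      rw [← Nat.sub_mul]; congr 1; omega
    rw [h1, Nat.mul_sub, mul_comm k C, ← hmul, mul_comm D (n + 1)]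
  have : catalanTriangle n k = C - D := by
    rw [catalanTriangle, hexact, Nat.mul_div_cancel_left _ (by omega : 0 < n + 1)]
  omega

theorem catalanTriangle_row_sum (n : ℕ) :
    ∑ k ∈ Finset.range (n + 1), catalanTriangle n k = catalan (n + 1) := by
  have hsum : (∑ k ∈ Finset.range (n + 1), catalanTriangle n k)
      + ∑ k ∈ Finset.range (n + 1), (n + k).choose (n + 1)
      = ∑ k ∈ Finset.range (n + 1), (n + k).choose n := by
    rw [← Finset.sum_add_distrib]
    exact Finset.sum_congr rfl fun k hk =>
      catalanTriangle_add n k (by simpa [Nat.lt_succ_iff] using hk)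
  -- evaluate the two binomial sums via the hockey stick identity
  have hIcc : ∀ r : ℕ, ∑ k ∈ Finset.range (n + 1), (n + k).choose r
      = ∑ m ∈ Finset.Icc n (2 * n), m.choose r := by
    intro r
    rw [← Finset.Ico_add_one_right_eq_Icc, Finset.sum_Ico_eq_sum_range]
    apply Finset.sum_congr
    · congr 1; omega
    · intros; rfl
  have hA : ∑ k ∈ Finset.range (n + 1), (n + k).choose n
      = (2 * n + 1).choose (n + 1) := by
    rw [hIcc, Nat.sum_Icc_choose]
  have hB : ∑ k ∈ Finset.range (n + 1), (n + k).choose (n + 1)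
      = (2 * n + 1).choose (n + 2) := by
    rw [hIcc]
    have : ∑ m ∈ Finset.Icc n (2 * n), m.choose (n + 1)
        = ∑ m ∈ Finset.Icc (n + 1) (2 * n), m.choose (n + 1) := by
      rcases Nat.eq_zero_or_pos n with h0 | h0
      · subst h0; simp
      · rw [Finset.Icc_eq_cons_Ioc (by omega : n ≤ 2 * n), Finset.sum_cons,
          Nat.choose_succ_self, zero_add, ← Finset.Icc_add_one_left_eq_Ioc]
    rw [this, Nat.sum_Icc_choose]
  -- the Catalan side
  have hcat : catalan (n + 1) + (2 * n + 1).choose (n + 2)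
      = (2 * n + 1).choose (n + 1) := by
    apply Nat.eq_of_mul_eq_mul_left (show 0 < n + 2 by omega)
    rw [Nat.mul_add, succ_mul_catalan_eq_centralBinom]
    have h1 : (n + 2) * (2 * n + 1).choose (n + 2)
        = n * (2 * n + 1).choose (n + 1) := by
      have h := Nat.choose_succ_right_eq (2 * n + 1) (n + 1)
      have h2 : 2 * n + 1 - (n + 1) = n := by omega
      rw [h2] at h
      rw [mul_comm (n + 2), mul_comm n]
      exact h
    have h3 : Nat.centralBinom (n + 1) = 2 * (2 * n + 1).choose (n + 1) := by
      have hsymm : (2 * n + 1).choose n = (2 * n + 1).choose (n + 1) := by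
        have := Nat.choose_symm (show n ≤ 2 * n + 1 by omega)
        have h4 : 2 * n + 1 - n = n + 1 := by omega
        rw [h4] at this
        exact this.symm
      rw [Nat.centralBinom]
      have h5 : 2 * (n + 1) = (2 * n + 1) + 1 := by omega
      rw [h5, Nat.choose_succ_succ, hsymm]
      ring
    rw [h3, h1]
    ring
  omega
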